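/- Suppose (φ_{t_n}) is a sequence of univalent maps on the exterior disk with φ_{t_n} → id uniformly on compacts, and (φ_{t_n} − id)/t_n → χ uniformly on compact subsets of {|z| > 1}, where t_n ↓ 0. Then on any compact K ⊂ {|z| > 1} eventually contained in the domains of ψ_{t_n} = φ_{t_n}^{−1}, one has (ψ_{t_n} − id)/t_n → −χ uniformly on K. -/

import Mathlib

open Complex Filter Set

/-- If `φ_{t_n}` are univalent maps on the exterior disk with
`φ_{t_n} → id` uniformly on compacts and `(φ_{t_n} − id)/t_n → χ` uniformly on
compact subsets of `{|z| > 1}` (where `t_n ↓ 0`), then on any compact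
`K ⊆ {|z| > 1}` eventually contained in the domains of the inverses
`ψ_{t_n} = φ_{t_n}⁻¹`, one has `(ψ_{t_n} − id)/t_n → −χ` uniformly on `K`. -/
theorem inverse_expansion_limit (t : ℕ → ℝ) (ht : ∀ n, 0 < t n)
    (hanti : StrictAnti t) (hlim : Tendsto t atTop (nhds 0))
    (φ ψ : ℕ → ℂ → ℂ) (χ : ℂ → ℂ)
    (hχhol : DifferentiableOn ℂ χ {z : ℂ | 1 < ‖z‖})
    (hφ : ∀ n, DifferentiableOn ℂ (φ n) {z : ℂ | 1 < ‖z‖} ∧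
      Set.InjOn (φ n) {z : ℂ | 1 < ‖z‖})
    (hφid : ∀ K : Set ℂ, K ⊆ {z : ℂ | 1 < ‖z‖} → IsCompact K →
      TendstoUniformlyOn (fun n => φ n) id atTop K)
    (hχconv : ∀ K : Set ℂ, K ⊆ {z : ℂ | 1 < ‖z‖} → IsCompact K →
      TendstoUniformlyOn (fun n z => (φ n z - z) / (t n : ℂ)) χ atTop K)
    (K : Set ℂ) (hK : K ⊆ {z : ℂ | 1 < ‖z‖}) (hKc : IsCompact K)
    (hψ : ∀ᶠ n in atTop, ∀ z ∈ K,
      ψ n z ∈ {z : ℂ | 1 < ‖z‖} ∧ φ n (ψ n z) = z) :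
    TendstoUniformlyOn (fun n z => (ψ n z - z) / (t n : ℂ)) (fun z => -χ z) atTop K := by
  set U : Set ℂ := {z : ℂ | 1 < ‖z‖} with hU
  have hUopen : IsOpen U := isOpen_lt continuous_const continuous_norm
  obtain ⟨r, hr, hrsub⟩ := hKc.exists_cthickening_subset_open hUopen hK
  set Kr := Metric.cthickening r K with hKrdef
  have hKrc : IsCompact Kr := hKc.cthickening
  have hKKr : K ⊆ Kr := Metric.self_subset_cthickening K
  -- uniform continuity of χ on Kr
  have hχc : UniformContinuousOn χ Kr :=
    hKrc.uniformContinuousOn_of_continuous ((hχhol.continuousOn).mono hrsub)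
  rw [Metric.tendstoUniformlyOn_iff]
  intro ε hε
  obtain ⟨δ, hδ, hδ'⟩ := Metric.uniformContinuousOn_iff.mp hχc (ε/2) (half_pos hε)
  set ρ := min (δ/2) r with hρdef
  have hρ : 0 < ρ := lt_min (by positivity) hr
  have h1 := Metric.tendstoUniformlyOn_iff.mp (hφid Kr hrsub hKrc) (ρ/2) (by positivity)
  have h2 := Metric.tendstoUniformlyOn_iff.mp (hχconv Kr hrsub hKrc) (ε/2) (half_pos hε)
  filter_upwards [h1, h2, hψ] with n hn1 hn2 hn3
  intro z hz
  have hball : Metric.closedBall z ρ ⊆ Kr := fun w hw =>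
    Metric.mem_cthickening_of_dist_le w z r K hz
      (le_trans (Metric.mem_closedBall.mp hw) (min_le_right _ _))
  -- Key: there is w in the closed ball with φ n w = z (minimum modulus principle).
  have key : ∃ w ∈ Metric.closedBall z ρ, φ n w = z := by
    by_contra hcon
    push_neg at hcon
    have hzball : z ∈ Metric.closedBall z ρ := Metric.mem_closedBall_self hρ.le
    have hne : ∀ w ∈ Metric.closedBall z ρ, φ n w - z ≠ 0 := fun w hw =>
      sub_ne_zero.mpr (hcon w hw)
    have hdiff : DifferentiableOn ℂ (fun w => (φ n w - z)⁻¹) (Metric.closedBall z ρ) :=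
      (((hφ n).1.mono (hball.trans hrsub)).sub (differentiableOn_const z)).inv hne
    have hdc : DiffContOnCl ℂ (fun w => (φ n w - z)⁻¹) (Metric.ball z ρ) := by
      apply DifferentiableOn.diffContOnCl
      rwa [closure_ball z hρ.ne']
    have hfr : ∀ w ∈ frontier (Metric.ball z ρ), ‖(φ n w - z)⁻¹‖ ≤ (ρ/2)⁻¹ := by
      intro w hw
      rw [frontier_ball z hρ.ne'] at hw
      have hwK : w ∈ Kr := hball (Metric.sphere_subset_closedBall hw)
      have hdw : dist w z = ρ := Metric.mem_sphere.mp hw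
      have h1w : dist (id w) (φ n w) < ρ/2 := hn1 w hwK
      have : ρ/2 ≤ ‖φ n w - z‖ := by
        have : ‖w - z‖ ≤ ‖φ n w - z‖ + ‖w - φ n w‖ := by
          simpa using norm_add_le (φ n w - z) (w - φ n w)
        have hwz : ‖w - z‖ = ρ := by rwa [← Complex.dist_eq]
        have hwf : ‖w - φ n w‖ < ρ/2 := by
          rw [← Complex.dist_eq]; simpa using h1w
        linarith
      rw [norm_inv]
      exact inv_anti₀ (by positivity) this
    have hzcl : z ∈ closure (Metric.ball z ρ) := by
      rw [closure_ball z hρ.ne']; exact hzball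
    have := Complex.norm_le_of_forall_mem_frontier_norm_le Metric.isBounded_ball hdc hfr hzcl
    rw [norm_inv] at this
    have habs : 0 < ‖φ n z - z‖ := by
      simpa using (norm_pos_iff.mpr (hne z hzball))
    have h3 : ρ/2 ≤ ‖φ n z - z‖ :=
      (inv_le_inv₀ habs (by positivity)).mp this
    have h4 : dist (id z) (φ n z) < ρ/2 := hn1 z (hKKr hz)
    rw [Complex.dist_eq] at h4
    simp only [id] at h4
    rw [← norm_neg] at h4
    simp only [neg_sub] at h4
    linarith
  obtain ⟨w, hwball, hwφ⟩ := key
  obtain ⟨hψU, hψφ⟩ := hn3 z hz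
  -- w = ψ n z by injectivity
  have hwU : w ∈ U := hrsub (hball hwball)
  have hweq : w = ψ n z := (hφ n).2 hwU hψU (by rw [hwφ, hψφ])
  have hψball : ψ n z ∈ Metric.closedBall z ρ := hweq ▸ hwball
  have hψKr : ψ n z ∈ Kr := hball hψball
  have hψz : ψ n z - z = -(φ n (ψ n z) - ψ n z) := by rw [hψφ]; ring
  have hdistψ : dist z (ψ n z) < δ := by
    have : dist (ψ n z) z ≤ ρ := Metric.mem_closedBall.mp hψball
    have hρδ : ρ ≤ δ/2 := min_le_left _ _
    rw [dist_comm]; linarith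
  have hχclose : dist (χ z) (χ (ψ n z)) < ε/2 := hδ' z (hKKr hz) (ψ n z) hψKr hdistψ
  have hφclose : dist (χ (ψ n z)) ((φ n (ψ n z) - ψ n z) / (t n : ℂ)) < ε/2 :=
    hn2 (ψ n z) hψKr
  calc dist (-χ z) ((ψ n z - z) / (t n : ℂ))
      = dist (χ z) ((φ n (ψ n z) - ψ n z) / (t n : ℂ)) := by
        rw [hψz, neg_div, dist_neg_neg]
    _ ≤ dist (χ z) (χ (ψ n z)) + dist (χ (ψ n z)) ((φ n (ψ n z) - ψ n z) / (t n : ℂ)) :=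
        dist_triangle _ _ _
    _ < ε/2 + ε/2 := add_lt_add hχclose hφclose
    _ = ε := add_halves ε
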